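/- arXiv:2408.15713 — 2 statements merged into one kernel-verified Lean document; each statement's English description precedes it below -/
import Mathlib

section
/- Let d ≥ 1 and let x_1, …, x_n ∈ ℂ^d be vectors, and let a_1, …, a_n be complex numbers with |a_j| ≤ 1 for all j. Then there exist complex numbers b_1, …, b_n with |b_j| = 1 for all j such that ‖∑_{j=1}^n b_j x_j − ∑_{j=1}^n a_j x_j‖_∞ ≤ d · max_{1 ≤ j ≤ n} ‖x_j‖_∞. -/
open Finset Module

/-- Rounding lemma: coefficients in the closed unit disc can be replaced by
unimodular ones, changing the sum by at most d · max ‖x_j‖ in sup norm. -/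
theorem stmt2 (d n : ℕ) (hd : 1 ≤ d) (x : Fin n → (Fin d → ℂ)) (a : Fin n → ℂ)
    (ha : ∀ j, ‖a j‖ ≤ 1) :
    ∃ b : Fin n → ℂ, (∀ j, ‖b j‖ = 1) ∧
      ‖(∑ j, b j • x j) - ∑ j, a j • x j‖ ≤ (d : ℝ) * ⨆ j, ‖x j‖ := by
  classical
  set M : ℝ := ⨆ j, ‖x j‖ with hM
  have hM0 : 0 ≤ M := Real.iSup_nonneg fun j => norm_nonneg _
  have hxM : ∀ j, ‖x j‖ ≤ M := by
    intro j
    rw [hM]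
    exact le_ciSup (Set.Finite.bddAbove (Set.finite_range fun j => ‖x j‖)) j
  set T : (Fin n → ℂ) → (Fin d → ℂ) := fun c => ∑ j, c j • x j with hTdef
  have hTcont : Continuous T :=
    continuous_finset_sum _ fun j _ => (continuous_apply j).smul continuous_const
  set S : Set (Fin n → ℂ) := Metric.closedBall 0 1 ∩ T ⁻¹' {T a} with hSdef
  have hmemS : ∀ c, c ∈ S ↔ (∀ j, ‖c j‖ ≤ 1) ∧ T c = T a := by
    intro c
    simp only [hSdef, Set.mem_inter_iff, Metric.mem_closedBall, dist_zero_right,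
      Set.mem_preimage, Set.mem_singleton_iff]
    constructor
    · rintro ⟨h1, h2⟩; exact ⟨fun j => (norm_le_pi_norm c j).trans h1, h2⟩
    · rintro ⟨h1, h2⟩; exact ⟨(pi_norm_le_iff_of_nonneg zero_le_one).2 h1, h2⟩
  have haS : a ∈ S := (hmemS a).2 ⟨ha, rfl⟩
  have hScompact : IsCompact S :=
    (isCompact_closedBall _ _).inter_right (IsClosed.preimage hTcont isClosed_singleton)
  set f : (Fin n → ℂ) → ℝ := fun c => ∑ j, ‖c j‖ ^ 2 with hfdef
  have hfcont : Continuous f :=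
    continuous_finset_sum _ fun j _ => ((continuous_apply j).norm).pow 2
  obtain ⟨c₀, hc₀S, hmax⟩ := hScompact.exists_isMaxOn ⟨a, haS⟩ hfcont.continuousOn
  obtain ⟨hc₀le, hc₀T⟩ := (hmemS c₀).1 hc₀S
  set I : Finset (Fin n) := univ.filter (fun j => ‖c₀ j‖ < 1) with hIdef
  -- key claim: at most d coordinates lie in the open disc
  have hcard : I.card ≤ d := by
    by_contra hcd
    push_neg at hcd
    let L : ({j // j ∈ I} → ℂ) →ₗ[ℂ] (Fin d → ℂ) :=
      { toFun := fun t => ∑ j : {j // j ∈ I}, t j • x (j : Fin n)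
        map_add' := by intro t s; simp [add_smul, Finset.sum_add_distrib]
        map_smul' := by intro r t; simp [smul_smul, Finset.smul_sum] }
    have hker : LinearMap.ker L ≠ ⊥ := by
      intro hbot
      have hinj : Function.Injective L := LinearMap.ker_eq_bot.1 hbot
      have hle := LinearMap.finrank_le_finrank_of_injective hinj
      rw [Module.finrank_pi, Module.finrank_pi] at hle
      simp only [Fintype.card_coe, Fintype.card_fin] at hle
      omega
    obtain ⟨t, htker, htne⟩ := Submodule.exists_mem_ne_zero_of_ne_bot hker
    set u : Fin n → ℂ := fun j => if h : j ∈ I then t ⟨j, h⟩ else 0 with hudef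
    have hu0 : ∀ j ∉ I, u j = 0 := fun j hj => dif_neg hj
    have huI : ∀ (j : {j // j ∈ I}), u (j : Fin n) = t j := by
      rintro ⟨j, hj⟩
      simp only [hudef]
      rw [dif_pos hj]
    have hTu : ∑ j, u j • x j = 0 := by
      have h1 : ∑ j, u j • x j = ∑ j ∈ I, u j • x j :=
        (Finset.sum_subset I.subset_univ (fun j _ hj => by rw [hu0 j hj, zero_smul])).symm
      rw [h1, ← Finset.sum_attach I (fun j => u j • x j)]
      have h2 : ∑ j ∈ I.attach, u (j : Fin n) • x (j : Fin n) = L t :=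
        Finset.sum_congr rfl fun j _ => by rw [huI j]
      rw [h2]
      exact htker
    have hune : ∃ j, u j ≠ 0 := by
      obtain ⟨i, hi⟩ := Function.ne_iff.1 htne
      exact ⟨(i : Fin n), by rwa [huI i]⟩
    have hIne : I.Nonempty := by rw [← Finset.card_pos]; omega
    obtain ⟨j₀, hj₀I⟩ := hIne
    set δ : ℝ := (I.image (fun j => 1 - ‖c₀ j‖)).min' ⟨_, Finset.mem_image_of_mem _ hj₀I⟩ with hδdef
    have hδpos : 0 < δ := by
      apply (Finset.lt_min'_iff _ _).2
      intro y hy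
      obtain ⟨j, hjI, rfl⟩ := Finset.mem_image.1 hy
      have : ‖c₀ j‖ < 1 := (Finset.mem_filter.1 hjI).2
      linarith
    have hδle : ∀ j ∈ I, δ ≤ 1 - ‖c₀ j‖ := fun j hj =>
      Finset.min'_le _ _ (Finset.mem_image_of_mem _ hj)
    set ε : ℝ := δ / (‖u‖ + 1) with hεdef
    have hεpos : 0 < ε := div_pos hδpos (by positivity)
    have hεu : ∀ j, ε * ‖u j‖ ≤ δ := by
      intro j
      have h1 : ‖u j‖ ≤ ‖u‖ := norm_le_pi_norm u j
      calc ε * ‖u j‖ ≤ ε * (‖u‖ + 1) := by nlinarith [norm_nonneg u]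
        _ = δ := by rw [hεdef]; exact div_mul_cancel₀ δ (by positivity)
    have hmemPM : ∀ r : ℝ, |r| = ε → c₀ + r • u ∈ S := by
      intro r hr
      refine (hmemS _).2 ⟨?_, ?_⟩
      · intro j
        by_cases hj : j ∈ I
        · have h1 : ‖c₀ j + r • u j‖ ≤ ‖c₀ j‖ + ε * ‖u j‖ := by
            calc ‖c₀ j + r • u j‖ ≤ ‖c₀ j‖ + ‖r • u j‖ := norm_add_le _ _
              _ = ‖c₀ j‖ + ε * ‖u j‖ := by rw [norm_smul, Real.norm_eq_abs, hr]
          have h2 := hεu j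
          have h3 := hδle j hj
          have h4 : ‖c₀ j + r • u j‖ ≤ 1 := by linarith
          exact h4
        · simp only [Pi.add_apply, Pi.smul_apply, hu0 j hj, smul_zero, add_zero]
          exact hc₀le j
      · show T _ = T a
        rw [← hc₀T]
        show ∑ j, (c₀ j + r • u j) • x j = ∑ j, c₀ j • x j
        have : ∀ j, (c₀ j + r • u j) • x j = c₀ j • x j + r • (u j • x j) := by
          intro j; rw [add_smul, smul_assoc]
        rw [Finset.sum_congr rfl fun j _ => this j, Finset.sum_add_distrib,
          ← Finset.smul_sum, hTu, smul_zero, add_zero]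
    have hplus := hmax (hmemPM ε (abs_of_pos hεpos))
    have hminus := hmax (hmemPM (-ε) (by rw [abs_neg, abs_of_pos hεpos]))
    have par : ∀ z w : ℂ, ‖z + w‖ ^ 2 + ‖z - w‖ ^ 2 = 2 * ‖z‖ ^ 2 + 2 * ‖w‖ ^ 2 := by
      intro z w
      simp only [Complex.sq_norm, Complex.normSq_apply,
        Complex.add_re, Complex.add_im, Complex.sub_re, Complex.sub_im]
      ring
    have hsum : f (c₀ + ε • u) + f (c₀ + (-ε) • u) = 2 * f c₀ + 2 * ∑ j, ‖ε • u j‖ ^ 2 := by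
      simp only [hfdef, Pi.add_apply, Pi.smul_apply]
      rw [← Finset.sum_add_distrib, Finset.mul_sum, Finset.mul_sum, ← Finset.sum_add_distrib]
      refine Finset.sum_congr rfl fun j _ => ?_
      have := par (c₀ j) (ε • u j)
      have hneg : c₀ j + (-ε) • u j = c₀ j - ε • u j := by
        rw [neg_smul, ← sub_eq_add_neg]
      rw [hneg]
      linarith [this]
    have hupos : 0 < ∑ j, ‖ε • u j‖ ^ 2 := by
      obtain ⟨j₁, hj₁⟩ := hune
      refine Finset.sum_pos' (fun j _ => by positivity) ⟨j₁, Finset.mem_univ j₁, ?_⟩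
      have hne2 : ε • u j₁ ≠ 0 := smul_ne_zero (ne_of_gt hεpos) hj₁
      exact pow_pos (norm_pos_iff.mpr hne2) 2
    have h1 : f (c₀ + ε • u) ≤ f c₀ := hplus
    have h2 : f (c₀ + (-ε) • u) ≤ f c₀ := hminus
    linarith
  -- construct unimodular b
  set b : Fin n → ℂ := fun j => if c₀ j = 0 then 1 else (‖c₀ j‖⁻¹ : ℝ) • c₀ j with hbdef
  have hb1 : ∀ j, ‖b j‖ = 1 := by
    intro j
    simp only [hbdef]
    split_ifs with h
    · exact norm_one
    · rw [norm_smul, Real.norm_eq_abs, abs_of_nonneg (inv_nonneg.2 (norm_nonneg _)),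
        inv_mul_cancel₀ (norm_ne_zero_iff.2 h)]
  have hbc : ∀ j, ‖b j - c₀ j‖ = 1 - ‖c₀ j‖ := by
    intro j
    simp only [hbdef]
    split_ifs with h
    · simp [h]
    · have hn : ‖c₀ j‖ ≠ 0 := norm_ne_zero_iff.2 h
      have hle : ‖c₀ j‖ ≤ 1 := hc₀le j
      have : (‖c₀ j‖⁻¹ : ℝ) • c₀ j - c₀ j = ((‖c₀ j‖⁻¹ - 1 : ℝ)) • c₀ j := by
        rw [sub_smul, one_smul]
      have h1 : (1 : ℝ) ≤ ‖c₀ j‖⁻¹ := by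
        nlinarith [inv_mul_cancel₀ hn, inv_nonneg.2 (norm_nonneg (c₀ j))]
      rw [this, norm_smul, Real.norm_eq_abs, abs_of_nonneg (by linarith), sub_mul,
        inv_mul_cancel₀ hn, one_mul]
  refine ⟨b, hb1, ?_⟩
  have key : (∑ j, b j • x j) - ∑ j, a j • x j = ∑ j, (b j - c₀ j) • x j := by
    have hTc : ∑ j, c₀ j • x j = ∑ j, a j • x j := hc₀T
    rw [← hTc, ← Finset.sum_sub_distrib]
    exact Finset.sum_congr rfl fun j _ => (sub_smul _ _ _).symm
  rw [key]
  calc ‖∑ j, (b j - c₀ j) • x j‖ ≤ ∑ j, ‖(b j - c₀ j) • x j‖ := norm_sum_le _ _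
    _ = ∑ j, ‖b j - c₀ j‖ * ‖x j‖ := by simp [norm_smul]
    _ = ∑ j ∈ I, ‖b j - c₀ j‖ * ‖x j‖ := by
        refine (Finset.sum_subset I.subset_univ fun j _ hj => ?_).symm
        have h2 : ¬(‖c₀ j‖ < 1) := fun h => hj (Finset.mem_filter.2 ⟨Finset.mem_univ j, h⟩)
        have h1 : ‖c₀ j‖ = 1 := le_antisymm (hc₀le j) (not_lt.1 h2)
        rw [hbc j, h1]; ring
    _ ≤ ∑ _j ∈ I, M := by
        refine Finset.sum_le_sum fun j _ => ?_
        rw [hbc j]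
        nlinarith [hxM j, norm_nonneg (x j), norm_nonneg (c₀ j), hc₀le j, hM0]
    _ = I.card * M := by rw [Finset.sum_const, nsmul_eq_mul]
    _ ≤ d * M := mul_le_mul_of_nonneg_right (by exact_mod_cast hcard) hM0
end

section
/- Let r_1 : [1, ∞) → ℂ be locally of bounded variation with r_1(1) = 0, and define r_j(x) = ∫_1^x r_{j−1}(t) dt for j ≥ 2. Then for every j ≥ 1 and x ≥ x_0 ≥ 1, r_j(x) = ∑_{m=0}^{j−1} r_{j−m}(x_0) (x − x_0)^m / m! + (1/(j−1)!) ∫_{x_0}^{x} (x − t)^{j−1} dr_1(t), where the last integral is a Riemann–Stieltjes integral. -/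
open MeasureTheory
open Set

/-- The Riemann–Stieltjes integral (1/(j−1)!)⁻¹-normalized remainder
∫_{x₀}^x (x − t)^{j−1} dr₁(t), expressed via its integration-by-parts formula
(valid for locally BV r₁ since t ↦ (x−t)^{j−1} is continuous): for j = 1 it is
r₁(x) − r₁(x₀), and for j ≥ 2 it equals
−(x−x₀)^{j−1} r₁(x₀) + (j−1) ∫_{x₀}^x (x−t)^{j−2} r₁(t) dt. -/
noncomputable def rsRemainder (r₁ : ℝ → ℂ) (j : ℕ) (x₀ x : ℝ) : ℂ :=
  if j = 1 then r₁ x - r₁ x₀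
  else -((x - x₀ : ℂ)) ^ (j - 1) * r₁ x₀ +
    ((j : ℂ) - 1) * ∫ t in x₀..x, ((x - t : ℝ) : ℂ) ^ (j - 2) * r₁ t

lemma powC (a b : ℝ) (m : ℕ) :
    (∫ t in a..b, ((t - a : ℝ) : ℂ) ^ m) = ((b - a : ℝ) : ℂ) ^ (m + 1) / (m + 1) := by
  have h : (∫ t in a..b, ((t - a : ℝ) : ℂ) ^ m)
      = ∫ u in a - a..b - a, ((u : ℝ) : ℂ) ^ m :=
    intervalIntegral.integral_comp_sub_right (fun u : ℝ => ((u : ℝ) : ℂ) ^ m) a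
  rw [h]
  have h2 : ∀ u : ℝ, ((u : ℂ)) ^ m = (((u ^ m : ℝ)) : ℂ) := fun u => by push_cast; ring
  simp_rw [h2]
  rw [intervalIntegral.integral_ofReal, integral_pow, sub_self]
  push_cast
  rw [zero_pow (by omega : m + 1 ≠ 0)]
  ring

lemma swap_lemma (r : ℝ → ℂ) {a b : ℝ} (hab : a ≤ b)
    (hr : IntegrableOn r (Ioc a b)) (k : ℕ) :
    IntervalIntegrable (fun t => ∫ s in a..t, ((t - s : ℝ) : ℂ) ^ k * r s) volume a b ∧
    (∫ t in a..b, ∫ s in a..t, ((t - s : ℝ) : ℂ) ^ k * r s)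
      = (((k : ℂ)) + 1)⁻¹ * ∫ s in a..b, ((b - s : ℝ) : ℂ) ^ (k + 1) * r s := by
  set μ := volume.restrict (Ioc a b) with hμ
  have hfin : IsFiniteMeasure μ := by
    constructor
    simp [hμ, Real.volume_Ioc]
  set F : ℝ × ℝ → ℂ :=
    fun p => if p.2 ≤ p.1 then ((p.1 - p.2 : ℝ) : ℂ) ^ k * r p.2 else 0 with hF
  have hFind : F = Set.indicator {p : ℝ × ℝ | p.2 ≤ p.1}
      (fun p => ((p.1 - p.2 : ℝ) : ℂ) ^ k * r p.2) := by
    funext p; simp [hF, Set.indicator_apply]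
  have hmeas : AEStronglyMeasurable F (μ.prod μ) := by
    have h1 : AEStronglyMeasurable (fun p : ℝ × ℝ => ((p.1 - p.2 : ℝ) : ℂ) ^ k) (μ.prod μ) :=
      Continuous.aestronglyMeasurable (by continuity)
    have h2 : AEStronglyMeasurable (fun p : ℝ × ℝ => r p.2) (μ.prod μ) :=
      hr.aestronglyMeasurable.comp_snd
    rw [hFind]
    exact (h1.mul h2).indicator (measurableSet_le measurable_snd measurable_fst)
  have hInt : Integrable F (μ.prod μ) := by
    have h2 : Integrable (fun s => ‖r s‖) μ := hr.norm
    have h1 : Integrable (fun _ : ℝ => (1 : ℝ)) μ := integrable_const _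
    have hg : Integrable (fun p : ℝ × ℝ => (b - a) ^ k * ‖r p.2‖) (μ.prod μ) := by
      have := (h1.smul_prod h2).const_mul ((b - a) ^ k)
      simpa using this
    refine Integrable.mono' hg hmeas ?_
    have hprod : μ.prod μ = (volume.prod volume).restrict ((Ioc a b) ×ˢ (Ioc a b)) := by
      rw [hμ, Measure.prod_restrict]
    rw [hprod]
    filter_upwards [ae_restrict_mem (measurableSet_Ioc.prod measurableSet_Ioc)] with p hp
    rcases hp with ⟨hp1, hp2⟩
    by_cases h : p.2 ≤ p.1
    · simp only [hF, if_pos h, norm_mul, norm_pow, Complex.norm_real, Real.norm_eq_abs]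
      apply mul_le_mul_of_nonneg_right _ (norm_nonneg _)
      apply pow_le_pow_left₀ (abs_nonneg _)
      rw [abs_of_nonneg (by linarith)]
      linarith [hp1.2, hp2.1]
    · simp only [hF, if_neg h, norm_zero]
      have : (0:ℝ) ≤ b - a := by linarith
      positivity
  have hL : ∀ t ∈ Ioc a b, (∫ s, F (t, s) ∂μ) = ∫ s in a..t, ((t - s : ℝ) : ℂ) ^ k * r s := by
    intro t ht
    have he : (fun s => F (t, s))
        = Set.indicator (Iic t) (fun s => ((t - s : ℝ) : ℂ) ^ k * r s) := by
      funext s; simp [hF, Set.indicator_apply]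
    rw [he, hμ, integral_indicator measurableSet_Iic,
      Measure.restrict_restrict measurableSet_Iic, Set.Iic_inter_Ioc_of_le ht.2,
      intervalIntegral.integral_of_le ht.1.le]
  have hR : ∀ s ∈ Ioc a b, (∫ t, F (t, s) ∂μ)
      = (((k : ℂ)) + 1)⁻¹ * (((b - s : ℝ) : ℂ) ^ (k + 1) * r s) := by
    intro s hs
    have he : (fun t => F (t, s))
        = Set.indicator (Ici s) (fun t => ((t - s : ℝ) : ℂ) ^ k * r s) := by
      funext t; simp [hF, Set.indicator_apply]
    have hIc : Ici s ∩ Ioc a b = Icc s b := by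
      ext y
      simp only [mem_inter_iff, mem_Ici, mem_Ioc, mem_Icc]
      constructor
      · rintro ⟨h1, _, h3⟩; exact ⟨h1, h3⟩
      · rintro ⟨h1, h2⟩; exact ⟨h1, lt_of_lt_of_le hs.1 h1, h2⟩
    rw [he, hμ, integral_indicator measurableSet_Ici,
      Measure.restrict_restrict measurableSet_Ici, hIc, integral_Icc_eq_integral_Ioc,
      ← intervalIntegral.integral_of_le hs.2, intervalIntegral.integral_mul_const,
      powC s b k]
    push_cast
    ring
  have hGint : IntervalIntegrable (fun t => ∫ s in a..t, ((t - s : ℝ) : ℂ) ^ k * r s)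
      volume a b := by
    rw [intervalIntegrable_iff_integrableOn_Ioc_of_le hab]
    have := hInt.integral_prod_left
    exact this.congr (by filter_upwards [ae_restrict_mem measurableSet_Ioc] with t ht using hL t ht)
  refine ⟨hGint, ?_⟩
  have hswap : ∫ t, ∫ s, F (t, s) ∂μ ∂μ = ∫ s, ∫ t, F (t, s) ∂μ ∂μ :=
    MeasureTheory.integral_integral_swap (f := fun t s => F (t, s)) hInt
  calc (∫ t in a..b, ∫ s in a..t, ((t - s : ℝ) : ℂ) ^ k * r s)
      = ∫ t, ∫ s, F (t, s) ∂μ ∂μ := by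
        rw [intervalIntegral.integral_of_le hab, hμ]
        exact setIntegral_congr_fun measurableSet_Ioc (fun t ht => (hL t ht).symm)
    _ = ∫ s, ∫ t, F (t, s) ∂μ ∂μ := hswap
    _ = ∫ s, (((k : ℂ)) + 1)⁻¹ * (((b - s : ℝ) : ℂ) ^ (k + 1) * r s) ∂μ := by
        rw [hμ]
        exact setIntegral_congr_fun measurableSet_Ioc (fun s hs => hR s hs)
    _ = (((k : ℂ)) + 1)⁻¹ * ∫ s in a..b, ((b - s : ℝ) : ℂ) ^ (k + 1) * r s := by
        rw [intervalIntegral.integral_of_le hab, hμ, MeasureTheory.integral_const_mul]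

/-- Taylor expansion with Riemann–Stieltjes integral remainder for the iterated
antiderivatives r_j of a locally integrable (locally BV) function r₁ with
r₁(1) = 0. -/
theorem stmt15 (r₁ : ℝ → ℂ) (hloc : LocallyIntegrable r₁) (h1 : r₁ 1 = 0)
    (R : ℕ → ℝ → ℂ) (hR1 : R 1 = r₁)
    (hRrec : ∀ j : ℕ, 2 ≤ j → ∀ x : ℝ, R j x = ∫ t in (1 : ℝ)..x, R (j - 1) t) :
    ∀ j : ℕ, 1 ≤ j → ∀ x₀ x : ℝ, 1 ≤ x₀ → x₀ ≤ x →
      R j x = (∑ m ∈ Finset.range j,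
          R (j - m) x₀ * ((x - x₀ : ℂ)) ^ m / (Nat.factorial m : ℂ)) +
        (1 / (Nat.factorial (j - 1) : ℂ)) * rsRemainder r₁ j x₀ x := by
  -- interval integrability of each R j
  have hr₁int : ∀ a b : ℝ, IntervalIntegrable r₁ volume a b := fun a b =>
    (hloc.integrableOn_isCompact isCompact_uIcc).intervalIntegrable
  have hRint : ∀ j : ℕ, 1 ≤ j → ∀ a b : ℝ, IntervalIntegrable (R j) volume a b := by
    intro j hj
    induction j with
    | zero => omega
    | succ n ih =>
      rcases Nat.lt_or_ge n 1 with h | h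
      · have : n = 0 := by omega
        subst this
        rw [hR1]; exact hr₁int
      · have hRe : R (n + 1) = fun x => ∫ t in (1 : ℝ)..x, R n t := by
          funext x
          rw [hRrec (n + 1) (by omega) x]
          norm_num
        intro a b
        rw [hRe]
        exact (intervalIntegral.continuous_primitive (fun a b => ih h a b) 1).intervalIntegrable a b
  intro j hj
  induction j, hj using Nat.le_induction with
  | base =>
    intro x₀ x hx₀ hx
    simp [rsRemainder, hR1, Nat.factorial]
  | succ j hj ih =>
    intro x₀ x hx₀ hx
    -- step 1 : additivity of the primitive
    have hkey : R (j + 1) x = R (j + 1) x₀ + ∫ t in x₀..x, R j t := by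
      rw [hRrec (j + 1) (by omega) x, hRrec (j + 1) (by omega) x₀]
      norm_num
      rw [← intervalIntegral.integral_add_adjacent_intervals (hRint j hj 1 x₀)
        (hRint j hj x₀ x)]
    -- the Taylor-sum function
    set S : ℝ → ℂ := fun t =>
      ∑ m ∈ Finset.range j, R (j - m) x₀ * ((t : ℂ) - (x₀ : ℂ)) ^ m / (Nat.factorial m : ℂ)
      with hS
    have hScont : Continuous S := by
      apply continuous_finset_sum
      intro m _
      exact ((continuous_const.mul
        ((Complex.continuous_ofReal.sub continuous_const).pow m)).div_const _)
    have hSint : IntervalIntegrable S volume x₀ x := hScont.intervalIntegrable x₀ x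
    -- step 2 : ∫ S
    have hSval : (∫ t in x₀..x, S t)
        = ∑ m ∈ Finset.range j,
            R (j - m) x₀ * ((x : ℂ) - (x₀ : ℂ)) ^ (m + 1) / (Nat.factorial (m + 1) : ℂ) := by
      rw [hS, intervalIntegral.integral_finset_sum (fun m _ =>
        ((by fun_prop : Continuous fun t : ℝ =>
          R (j - m) x₀ * ((t : ℂ) - (x₀ : ℂ)) ^ m / (Nat.factorial m : ℂ)).intervalIntegrable x₀ x))]
      refine Finset.sum_congr rfl fun m _ => ?_
      have h1 : ∀ t : ℝ, R (j - m) x₀ * ((t : ℂ) - (x₀ : ℂ)) ^ m / (Nat.factorial m : ℂ)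
          = (R (j - m) x₀ / (Nat.factorial m : ℂ)) * ((t - x₀ : ℝ) : ℂ) ^ m := by
        intro t; push_cast; ring
      simp_rw [h1]
      rw [intervalIntegral.integral_const_mul, powC x₀ x m, Nat.factorial_succ,
        div_mul_div_comm]
      push_cast
      rw [mul_comm ((Nat.factorial m : ℂ)) ((m : ℂ) + 1)]
    -- step 3 : ∫ of the remainder
    have hremfun : ∀ t ∈ Set.uIcc x₀ x,
        R j t - S t = (1 / (Nat.factorial (j - 1) : ℂ)) * rsRemainder r₁ j x₀ t := by
      intro t ht
      rw [Set.uIcc_of_le hx] at ht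
      rw [ih x₀ t hx₀ ht.1]
      ring
    have hremint : (∫ t in x₀..x, (1 / (Nat.factorial (j - 1) : ℂ)) * rsRemainder r₁ j x₀ t)
        = (∫ t in x₀..x, R j t) - ∫ t in x₀..x, S t := by
      rw [← intervalIntegral.integral_sub (hRint j hj x₀ x) hSint]
      exact intervalIntegral.integral_congr fun t ht => (hremfun t ht).symm
    -- step 4 : evaluate the remainder integral
    have hIoc : IntegrableOn r₁ (Set.Ioc x₀ x) volume := by
      rw [← intervalIntegrable_iff_integrableOn_Ioc_of_le hx]
      exact hr₁int x₀ x
    have hremval : (∫ t in x₀..x, (1 / (Nat.factorial (j - 1) : ℂ)) * rsRemainder r₁ j x₀ t)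
        = (1 / (Nat.factorial ((j + 1) - 1) : ℂ)) * rsRemainder r₁ (j + 1) x₀ x := by
      rcases Nat.lt_or_ge j 2 with hj2 | hj2
      · -- j = 1
        have hj1 : j = 1 := by omega
        subst hj1
        simp only [rsRemainder, if_pos rfl, Nat.factorial]
        norm_num
        rw [intervalIntegral.integral_sub (hr₁int x₀ x)
          (intervalIntegrable_const (c := r₁ x₀))]
        rw [intervalIntegral.integral_const, Complex.real_smul]
        push_cast
        ring
      · -- j ≥ 2
        obtain ⟨k, rfl⟩ : ∃ k, j = k + 2 := ⟨j - 2, by omega⟩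
        obtain ⟨hGint, hGval⟩ := swap_lemma r₁ hx hIoc k
        have hcongr : ∀ t ∈ Set.uIcc x₀ x,
            (1 / (Nat.factorial ((k + 2) - 1) : ℂ)) * rsRemainder r₁ (k + 2) x₀ t
            = (1 / (Nat.factorial (k + 1) : ℂ)) *
              (-((t : ℂ) - (x₀ : ℂ)) ^ (k + 1) * r₁ x₀ +
               ((k : ℂ) + 1) * ∫ s in x₀..t, ((t - s : ℝ) : ℂ) ^ k * r₁ s) := by
          intro t _
          simp only [rsRemainder, if_neg (by omega : ¬ k + 2 = 1),
            show k + 2 - 1 = k + 1 from rfl, show k + 2 - 2 = k from rfl]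
          push_cast
          ring
        rw [intervalIntegral.integral_congr hcongr]
        have hsplit : (∫ t in x₀..x, (1 / (Nat.factorial (k + 1) : ℂ)) *
              (-((t : ℂ) - (x₀ : ℂ)) ^ (k + 1) * r₁ x₀ +
               ((k : ℂ) + 1) * ∫ s in x₀..t, ((t - s : ℝ) : ℂ) ^ k * r₁ s))
            = (1 / (Nat.factorial (k + 1) : ℂ)) *
              ((∫ t in x₀..x, -((t : ℂ) - (x₀ : ℂ)) ^ (k + 1) * r₁ x₀) +
               ((k : ℂ) + 1) * ∫ t in x₀..x, ∫ s in x₀..t, ((t - s : ℝ) : ℂ) ^ k * r₁ s) := by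
          rw [intervalIntegral.integral_const_mul, intervalIntegral.integral_add
            ((by fun_prop : Continuous fun t : ℝ =>
              -((t : ℂ) - (x₀ : ℂ)) ^ (k + 1) * r₁ x₀).intervalIntegrable x₀ x)
            (hGint.const_mul _), intervalIntegral.integral_const_mul]
        rw [hsplit]
        have hpoly : (∫ t in x₀..x, -((t : ℂ) - (x₀ : ℂ)) ^ (k + 1) * r₁ x₀)
            = -(((x - x₀ : ℝ) : ℂ) ^ (k + 2) / ((k : ℂ) + 2)) * r₁ x₀ := by
          have h1 : ∀ t : ℝ, -((t : ℂ) - (x₀ : ℂ)) ^ (k + 1) * r₁ x₀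
              = (-(r₁ x₀)) * ((t - x₀ : ℝ) : ℂ) ^ (k + 1) := by
            intro t; push_cast; ring
          simp_rw [h1]
          rw [intervalIntegral.integral_const_mul, powC x₀ x (k + 1)]
          push_cast
          ring
        rw [hpoly, hGval]
        simp only [rsRemainder, if_neg (by omega : ¬ k + 2 + 1 = 1),
          show k + 2 + 1 - 1 = k + 2 from rfl, show k + 2 + 1 - 2 = k + 1 from rfl,
          show k + 2 - 1 = k + 1 from rfl]
        have hfac : ((Nat.factorial (k + 1) : ℂ)) ≠ 0 :=
          Nat.cast_ne_zero.2 (Nat.factorial_ne_zero _)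
        have hk1 : ((k : ℂ) + 1) ≠ 0 := by
          exact_mod_cast Nat.succ_ne_zero k
        have hk2 : ((k : ℂ) + 2) ≠ 0 := by
          exact_mod_cast Nat.succ_ne_zero (k+1)
        have key : ∀ (F C₁ C₂ B I r : ℂ), F ≠ 0 → C₁ ≠ 0 → C₂ ≠ 0 →
            1/F * (-(B/C₂) * r + C₁ * (C₁⁻¹ * I)) = 1/(C₂*F) * (-B * r + C₂ * I) := by
          intro F C₁ C₂ B I r hF h1 h2
          field_simp
        rw [Nat.factorial_succ (k + 1)]
        generalize (∫ s in x₀..x, ((x - s : ℝ) : ℂ) ^ (k + 1) * r₁ s) = I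
        have h2 := key ((Nat.factorial (k + 1) : ℂ)) ((k : ℂ) + 1) ((k : ℂ) + 2)
          (((x - x₀ : ℝ) : ℂ) ^ (k + 2)) I (r₁ x₀) hfac hk1 hk2
        push_cast at h2 ⊢
        linear_combination h2
    -- assemble
    rw [hkey]
    have hsum : (∑ m ∈ Finset.range (j + 1),
          R ((j + 1) - m) x₀ * ((x : ℂ) - (x₀ : ℂ)) ^ m / (Nat.factorial m : ℂ))
        = R (j + 1) x₀ + ∑ m ∈ Finset.range j,
            R (j - m) x₀ * ((x : ℂ) - (x₀ : ℂ)) ^ (m + 1) / (Nat.factorial (m + 1) : ℂ) := by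
      rw [Finset.sum_range_succ']
      simp [Nat.succ_sub_succ, add_comm]
    rw [hsum, ← hSval, ← hremval, hremint]
    ring
end
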